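/- For the disjoint union G ∪̇ H of two finite simple graphs G and H (identifying its vertex set with the disjoint union of V(G) and V(H)), the maximal nongenerating sets are exactly 𝒩(G ∪̇ H) = { N ∪ V(H) : N ∈ 𝒩(G) } ∪ { V(G) ∪ N : N ∈ 𝒩(H) }. -/

import Mathlib

open SimpleGraph

variable {V : Type*}

/-- `w` lies on a geodesic (shortest path) between `u` and `v` in `G`. -/
def OnGeodesic (G : SimpleGraph V) (u v w : V) : Prop :=
  ∃ p : G.Walk u v, p.IsPath ∧ p.length = G.dist u v ∧ w ∈ p.support

/-- A set of vertices is geodetically convex if it contains every vertex lying on a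
geodesic between two of its elements. -/
def GeoConvex (G : SimpleGraph V) (S : Set V) : Prop :=
  ∀ ⦃u⦄, u ∈ S → ∀ ⦃v⦄, v ∈ S → ∀ ⦃w⦄, OnGeodesic G u v w → w ∈ S

/-- The geodetic convex hull of a set of vertices: the smallest geodetically convex
set containing it. -/
def geoHull (G : SimpleGraph V) (S : Set V) : Set V :=
  ⋂₀ {K : Set V | S ⊆ K ∧ GeoConvex G K}

/-- A set of vertices is generating if its convex hull is the whole vertex set. -/
def GeoGenerates (G : SimpleGraph V) (S : Set V) : Prop :=
  geoHull G S = Set.univ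

/-- A maximal nongenerating set: a nongenerating set not properly contained in any
nongenerating set.  The family of these is `𝒩(G)`. -/
def MaxNongen (G : SimpleGraph V) (N : Set V) : Prop :=
  ¬ GeoGenerates G N ∧ ∀ M : Set V, ¬ GeoGenerates G M → N ⊆ M → N = M

/-- The Frattini subset `Φ(G)`: the intersection of all maximal nongenerating sets. -/
def geoFrattini (G : SimpleGraph V) : Set V :=
  ⋂₀ {N : Set V | MaxNongen G N}

/-- A vertex is simplicial if its neighbors induce a complete graph. -/
def Simplicial (G : SimpleGraph V) (v : V) : Prop :=
  ∀ ⦃u w : V⦄, G.Adj v u → G.Adj v w → u ≠ w → G.Adj u w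

/-- A minimal generating set: a generating set no proper subset of which generates.
The family of these is `𝒢(G)`. -/
def MinGen (G : SimpleGraph V) (L : Set V) : Prop :=
  GeoGenerates G L ∧ ∀ M : Set V, GeoGenerates G M → M ⊆ L → M = L

section Aux
open Sum
variable {α β : Type*} {G : SimpleGraph α} {H : SimpleGraph β}

lemma sum_walk_lift_inl : ∀ {x y : α ⊕ β} (p : (G ⊕g H).Walk x y) (u : α), x = inl u →
    ∃ (v : α) (q : G.Walk u v), y = inl v ∧ p.length = q.length ∧
      p.support = q.support.map inl ∧ (p.IsPath → q.IsPath) := by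
  intro x y p
  induction p with
  | nil =>
    intro u hx
    exact ⟨u, Walk.nil, hx, by simp, by simp [hx], fun _ => Walk.IsPath.nil⟩
  | @cons a w c h p ih =>
    intro u hx
    subst hx
    cases w with
    | inr w' => simp at h
    | inl w' =>
      obtain ⟨v, q, hy, hlen, hsupp, hpath⟩ := ih w' rfl
      refine ⟨v, Walk.cons (by simpa using h) q, hy, by simp [hlen], by simp [hsupp], ?_⟩
      intro hp
      rw [Walk.cons_isPath_iff] at hp ⊢
      refine ⟨hpath hp.1, fun hu => hp.2 ?_⟩
      rw [hsupp]
      exact List.mem_map.mpr ⟨u, hu, rfl⟩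

lemma sum_walk_lift_inr : ∀ {x y : α ⊕ β} (p : (G ⊕g H).Walk x y) (u : β), x = inr u →
    ∃ (v : β) (q : H.Walk u v), y = inr v ∧ p.length = q.length ∧
      p.support = q.support.map inr ∧ (p.IsPath → q.IsPath) := by
  intro x y p
  induction p with
  | nil =>
    intro u hx
    exact ⟨u, Walk.nil, hx, by simp, by simp [hx], fun _ => Walk.IsPath.nil⟩
  | @cons a w c h p ih =>
    intro u hx
    subst hx
    cases w with
    | inl w' => simp at h
    | inr w' =>
      obtain ⟨v, q, hy, hlen, hsupp, hpath⟩ := ih w' rfl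
      refine ⟨v, Walk.cons (by simpa using h) q, hy, by simp [hlen], by simp [hsupp], ?_⟩
      intro hp
      rw [Walk.cons_isPath_iff] at hp ⊢
      refine ⟨hpath hp.1, fun hu => hp.2 ?_⟩
      rw [hsupp]
      exact List.mem_map.mpr ⟨u, hu, rfl⟩

lemma sum_dist_inl (u v : α) : (G ⊕g H).dist (inl u) (inl v) = G.dist u v := by
  by_cases hr : G.Reachable u v
  · obtain ⟨q, hq⟩ := hr.exists_walk_length_eq_dist
    refine le_antisymm ?_ ?_
    · calc (G ⊕g H).dist (inl u) (inl v) ≤ (q.map Embedding.sumInl.toHom).length :=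
            dist_le _
        _ = G.dist u v := by simp [hq]
    · have hr' : (G ⊕g H).Reachable (inl u) (inl v) := ⟨q.map Embedding.sumInl.toHom⟩
      obtain ⟨p, hp⟩ := hr'.exists_walk_length_eq_dist
      obtain ⟨v', q', hy, hlen, -, -⟩ := sum_walk_lift_inl p u rfl
      obtain rfl : v' = v := inl_injective hy.symm
      rw [← hp, hlen]
      exact dist_le q'
  · have h2 : ¬ (G ⊕g H).Reachable (inl u) (inl v) := by
      rintro ⟨p⟩
      obtain ⟨v', q, hy, -, -, -⟩ := sum_walk_lift_inl p u rfl
      obtain rfl : v' = v := inl_injective hy.symm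
      exact hr ⟨q⟩
    rw [dist_eq_zero_of_not_reachable h2, dist_eq_zero_of_not_reachable hr]

lemma sum_dist_inr (u v : β) : (G ⊕g H).dist (inr u) (inr v) = H.dist u v := by
  by_cases hr : H.Reachable u v
  · obtain ⟨q, hq⟩ := hr.exists_walk_length_eq_dist
    refine le_antisymm ?_ ?_
    · calc (G ⊕g H).dist (inr u) (inr v) ≤ (q.map Embedding.sumInr.toHom).length :=
            dist_le _
        _ = H.dist u v := by simp [hq]
    · have hr' : (G ⊕g H).Reachable (inr u) (inr v) := ⟨q.map Embedding.sumInr.toHom⟩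
      obtain ⟨p, hp⟩ := hr'.exists_walk_length_eq_dist
      obtain ⟨v', q', hy, hlen, -, -⟩ := sum_walk_lift_inr p u rfl
      obtain rfl : v' = v := inr_injective hy.symm
      rw [← hp, hlen]
      exact dist_le q'
  · have h2 : ¬ (G ⊕g H).Reachable (inr u) (inr v) := by
      rintro ⟨p⟩
      obtain ⟨v', q, hy, -, -, -⟩ := sum_walk_lift_inr p u rfl
      obtain rfl : v' = v := inr_injective hy.symm
      exact hr ⟨q⟩
    rw [dist_eq_zero_of_not_reachable h2, dist_eq_zero_of_not_reachable hr]

lemma onGeodesic_sum_inl {u v : α} {w : α ⊕ β} :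
    OnGeodesic (G ⊕g H) (inl u) (inl v) w ↔ ∃ w', w = inl w' ∧ OnGeodesic G u v w' := by
  constructor
  · rintro ⟨p, hp, hlen, hw⟩
    obtain ⟨v', q, hy, hl, hs, hpath⟩ := sum_walk_lift_inl p u rfl
    obtain rfl : v' = v := inl_injective hy.symm
    rw [hs] at hw
    obtain ⟨w', hw', rfl⟩ := List.mem_map.mp hw
    exact ⟨w', rfl, q, hpath hp, by rw [← hl, hlen, sum_dist_inl], hw'⟩
  · rintro ⟨w', rfl, q, hq, hlen, hw⟩
    refine ⟨q.map Embedding.sumInl.toHom,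
      Walk.map_isPath_of_injective (fun a b hab => by simpa using hab) hq,
      by simp [hlen, sum_dist_inl]; exact (Walk.length_map _ _).trans hlen, ?_⟩
    refine (congrArg (inl w' ∈ ·) (Walk.support_map Embedding.sumInl.toHom q)).mpr ?_
    exact List.mem_map.mpr ⟨w', hw, rfl⟩

lemma onGeodesic_sum_inr {u v : β} {w : α ⊕ β} :
    OnGeodesic (G ⊕g H) (inr u) (inr v) w ↔ ∃ w', w = inr w' ∧ OnGeodesic H u v w' := by
  constructor
  · rintro ⟨p, hp, hlen, hw⟩
    obtain ⟨v', q, hy, hl, hs, hpath⟩ := sum_walk_lift_inr p u rfl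
    obtain rfl : v' = v := inr_injective hy.symm
    rw [hs] at hw
    obtain ⟨w', hw', rfl⟩ := List.mem_map.mp hw
    exact ⟨w', rfl, q, hpath hp, by rw [← hl, hlen, sum_dist_inr], hw'⟩
  · rintro ⟨w', rfl, q, hq, hlen, hw⟩
    refine ⟨q.map Embedding.sumInr.toHom,
      Walk.map_isPath_of_injective (fun a b hab => by simpa using hab) hq,
      by simp [hlen, sum_dist_inr]; exact (Walk.length_map _ _).trans hlen, ?_⟩
    refine (congrArg (inr w' ∈ ·) (Walk.support_map Embedding.sumInr.toHom q)).mpr ?_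
    exact List.mem_map.mpr ⟨w', hw, rfl⟩

lemma not_onGeodesic_inl_inr {u : α} {v : β} {w : α ⊕ β} :
    ¬ OnGeodesic (G ⊕g H) (inl u) (inr v) w := by
  rintro ⟨p, -, -, -⟩
  obtain ⟨v', q, hy, -, -, -⟩ := sum_walk_lift_inl p u rfl
  simp at hy

lemma not_onGeodesic_inr_inl {u : β} {v : α} {w : α ⊕ β} :
    ¬ OnGeodesic (G ⊕g H) (inr u) (inl v) w := by
  rintro ⟨p, -, -, -⟩
  obtain ⟨v', q, hy, -, -, -⟩ := sum_walk_lift_inr p u rfl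
  simp at hy

end Aux

section Hull
variable {G : SimpleGraph V} {S K : Set V}

lemma subset_geoHull (G : SimpleGraph V) (S : Set V) : S ⊆ geoHull G S :=
  fun x hx => Set.mem_sInter.mpr fun _ hK => hK.1 hx

lemma geoHull_min (h1 : S ⊆ K) (h2 : GeoConvex G K) : geoHull G S ⊆ K :=
  fun x hx => Set.mem_sInter.mp hx K ⟨h1, h2⟩

lemma geoConvex_geoHull : GeoConvex G (geoHull G S) := fun u hu v hv w hw =>
  Set.mem_sInter.mpr fun K hK =>
    hK.2 (Set.mem_sInter.mp hu K hK) (Set.mem_sInter.mp hv K hK) hw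

lemma geoGenerates_univ (G : SimpleGraph V) : GeoGenerates G Set.univ :=
  Set.eq_univ_of_univ_subset (subset_geoHull _ _)

end Hull

section Sum2
open Sum
variable {α β : Type*} {G : SimpleGraph α} {H : SimpleGraph β}

lemma geoHull_sum (S : Set (α ⊕ β)) :
    geoHull (G ⊕g H) S =
      inl '' geoHull G (inl ⁻¹' S) ∪ inr '' geoHull H (inr ⁻¹' S) := by
  apply Set.Subset.antisymm
  · apply geoHull_min
    · rintro (a | b) hx
      · exact Or.inl ⟨a, subset_geoHull _ _ hx, rfl⟩
      · exact Or.inr ⟨b, subset_geoHull _ _ hx, rfl⟩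
    · rintro u hu v hv w hw
      rcases hu with ⟨a, ha, rfl⟩ | ⟨a, ha, rfl⟩ <;>
        rcases hv with ⟨b, hb, rfl⟩ | ⟨b, hb, rfl⟩
      · obtain ⟨w', rfl, hw'⟩ := onGeodesic_sum_inl.mp hw
        exact Or.inl ⟨w', geoConvex_geoHull ha hb hw', rfl⟩
      · exact absurd hw not_onGeodesic_inl_inr
      · exact absurd hw not_onGeodesic_inr_inl
      · obtain ⟨w', rfl, hw'⟩ := onGeodesic_sum_inr.mp hw
        exact Or.inr ⟨w', geoConvex_geoHull ha hb hw', rfl⟩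
  · rintro x (⟨a, ha, rfl⟩ | ⟨b, hb, rfl⟩)
    · refine geoHull_min (K := inl ⁻¹' geoHull (G ⊕g H) S)
        (fun y hy => subset_geoHull _ _ hy) ?_ ha
      intro p hp q hq r hr
      exact geoConvex_geoHull hp hq (onGeodesic_sum_inl.mpr ⟨r, rfl, hr⟩)
    · refine geoHull_min (K := inr ⁻¹' geoHull (G ⊕g H) S)
        (fun y hy => subset_geoHull _ _ hy) ?_ hb
      intro p hp q hq r hr
      exact geoConvex_geoHull hp hq (onGeodesic_sum_inr.mpr ⟨r, rfl, hr⟩)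

lemma geoGenerates_sum_iff' (S : Set (α ⊕ β)) :
    GeoGenerates (G ⊕g H) S ↔
      GeoGenerates G (inl ⁻¹' S) ∧ GeoGenerates H (inr ⁻¹' S) := by
  unfold GeoGenerates
  rw [geoHull_sum]
  constructor
  · intro h
    constructor
    · apply Set.eq_univ_of_forall; intro a
      have := h.ge (Set.mem_univ (inl a : α ⊕ β))
      rcases this with ⟨a', ha', heq⟩ | ⟨b, -, heq⟩
      · exact inl_injective heq ▸ ha'
      · simp at heq
    · apply Set.eq_univ_of_forall; intro b
      have := h.ge (Set.mem_univ (inr b : α ⊕ β))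
      rcases this with ⟨a, -, heq⟩ | ⟨b', hb', heq⟩
      · simp at heq
      · exact inr_injective heq ▸ hb'
  · rintro ⟨h1, h2⟩
    rw [h1, h2]
    apply Set.eq_univ_of_forall
    rintro (a | b)
    · exact Or.inl ⟨a, trivial, rfl⟩
    · exact Or.inr ⟨b, trivial, rfl⟩

lemma sum_decomp (N : Set (α ⊕ β)) :
    N = inl '' (inl ⁻¹' N) ∪ inr '' (inr ⁻¹' N) := by
  ext (a | b) <;> simp

lemma preL1 (M : Set α) : inl ⁻¹' (inl '' M ∪ Set.range (inr : β → α ⊕ β)) = M := by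
  ext a; simp
lemma preL2 (M : Set α) : inr ⁻¹' (inl '' M ∪ Set.range (inr : β → α ⊕ β)) = Set.univ := by
  ext b; simp
lemma preR1 (M : Set β) : inl ⁻¹' (Set.range (inl : α → α ⊕ β) ∪ inr '' M) = Set.univ := by
  ext a; simp
lemma preR2 (M : Set β) : inr ⁻¹' (Set.range (inl : α → α ⊕ β) ∪ inr '' M) = M := by
  ext b; simp

end Sum2

open Sum in
theorem maxNongen_sum_iff {α β : Type*} [Fintype α] [Fintype β]
    (G : SimpleGraph α) (H : SimpleGraph β) (N : Set (α ⊕ β)) :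
    MaxNongen (G ⊕g H) N ↔
      (∃ M : Set α, MaxNongen G M ∧ N = Sum.inl '' M ∪ Set.range Sum.inr) ∨
      (∃ M : Set β, MaxNongen H M ∧ N = Set.range Sum.inl ∪ Sum.inr '' M) := by
  constructor
  · rintro ⟨hng, hmax⟩
    rw [geoGenerates_sum_iff'] at hng
    by_cases hA : GeoGenerates G (inl ⁻¹' N)
    · have hB : ¬ GeoGenerates H (inr ⁻¹' N) := fun h => hng ⟨hA, h⟩
      right
      have hng' : ∀ M : Set β, ¬ GeoGenerates H M →
          ¬ GeoGenerates (G ⊕g H) (Set.range inl ∪ inr '' M) := by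
        intro M hM h
        rw [geoGenerates_sum_iff', preR1, preR2] at h
        exact hM h.2
      have hsub : N ⊆ Set.range inl ∪ inr '' (inr ⁻¹' N) := by
        rintro (a | b) hx
        · exact Or.inl ⟨a, rfl⟩
        · exact Or.inr ⟨b, hx, rfl⟩
      have hNeq : N = Set.range inl ∪ inr '' (inr ⁻¹' N) := hmax _ (hng' _ hB) hsub
      refine ⟨inr ⁻¹' N, ⟨hB, ?_⟩, hNeq⟩
      intro M hM hBM
      have h1 : N ⊆ Set.range inl ∪ inr '' M :=
        hNeq.trans_subset (Set.union_subset_union_right _ (Set.image_mono hBM))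
      have h2 := hmax _ (hng' _ hM) h1
      rw [h2, preR2]
    · left
      have hng' : ∀ M : Set α, ¬ GeoGenerates G M →
          ¬ GeoGenerates (G ⊕g H) (inl '' M ∪ Set.range inr) := by
        intro M hM h
        rw [geoGenerates_sum_iff', preL1, preL2] at h
        exact hM h.1
      have hsub : N ⊆ inl '' (inl ⁻¹' N) ∪ Set.range inr := by
        rintro (a | b) hx
        · exact Or.inl ⟨a, hx, rfl⟩
        · exact Or.inr ⟨b, rfl⟩
      have hNeq : N = inl '' (inl ⁻¹' N) ∪ Set.range inr := hmax _ (hng' _ hA) hsub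
      refine ⟨inl ⁻¹' N, ⟨hA, ?_⟩, hNeq⟩
      intro M hM hAM
      have h1 : N ⊆ inl '' M ∪ Set.range inr :=
        hNeq.trans_subset (Set.union_subset_union_left _ (Set.image_mono hAM))
      have h2 := hmax _ (hng' _ hM) h1
      rw [h2, preL1]
  · rintro (⟨M, ⟨hMng, hMmax⟩, rfl⟩ | ⟨M, ⟨hMng, hMmax⟩, rfl⟩)
    · refine ⟨?_, ?_⟩
      · rw [geoGenerates_sum_iff', preL1]
        exact fun h => hMng h.1
      · intro N' hN' hsub
        rw [geoGenerates_sum_iff'] at hN'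
        have hBuniv : inr ⁻¹' N' = Set.univ := by
          apply Set.eq_univ_of_univ_subset
          rw [← preL2 M]
          exact Set.preimage_mono hsub
        have hA' : ¬ GeoGenerates G (inl ⁻¹' N') :=
          fun h => hN' ⟨h, hBuniv ▸ geoGenerates_univ H⟩
        have hM' : M ⊆ inl ⁻¹' N' := by
          rw [← preL1 (β := β) M]
          exact Set.preimage_mono hsub
        have hMeq := hMmax _ hA' hM'
        rw [sum_decomp N', ← hMeq, hBuniv, Set.image_univ]
    · refine ⟨?_, ?_⟩
      · rw [geoGenerates_sum_iff', preR2]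
        exact fun h => hMng h.2
      · intro N' hN' hsub
        rw [geoGenerates_sum_iff'] at hN'
        have hAuniv : inl ⁻¹' N' = Set.univ := by
          apply Set.eq_univ_of_univ_subset
          rw [← preR1 M]
          exact Set.preimage_mono hsub
        have hB' : ¬ GeoGenerates H (inr ⁻¹' N') :=
          fun h => hN' ⟨hAuniv ▸ geoGenerates_univ G, h⟩
        have hM' : M ⊆ inr ⁻¹' N' := by
          rw [← preR2 (α := α) M]
          exact Set.preimage_mono hsub
        have hMeq := hMmax _ hB' hM'
        rw [sum_decomp N', ← hMeq, hAuniv, Set.image_univ]
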